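/- arXiv:2604.23987 — 2 statements merged into one kernel-verified Lean document; each statement's English description precedes it below -/
import Mathlib

section
/- Let α ∈ (0,1), let X₁, …, X_m be i.i.d. real random variables whose common CDF F is continuous (so the values are almost surely pairwise distinct), let k := ⌈m(1 − α)⌉ ≤ m, and let q̂ be the k-th order statistic of X₁, …, X_m. Then for every δ ∈ (0,1), with probability at least 1 − δ, |F(q̂) − (1 − α)| ≤ √( log(2/δ) / (2m) ) + 1/m. -/
open MeasureTheory ProbabilityTheory

/-- The `k`-th order statistic (1-indexed) of the values `x 0, …, x (m-1)`:
the `k`-th smallest value when sorted in nondecreasing order. -/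
noncomputable def orderStat {m : ℕ} (x : Fin m → ℝ) (k : ℕ) : ℝ :=
  (Multiset.sort (Multiset.map x Finset.univ.val) (· ≤ ·)).getD (k - 1) 0

lemma sorted_getElem_le_iff {l : List ℝ} (hl : l.Pairwise (· ≤ ·)) {j : ℕ} (hj : j < l.length)
    (s : ℝ) : l[j] ≤ s ↔ j < l.countP (fun a => decide (a ≤ s)) := by
  constructor
  · intro h
    have h1 : l.countP (fun a => decide (a ≤ s)) =
        (l.take (j+1)).countP (fun a => decide (a ≤ s)) +
        (l.drop (j+1)).countP (fun a => decide (a ≤ s)) := by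
      rw [← List.countP_append, List.take_append_drop]
    have h2 : (l.take (j+1)).countP (fun a => decide (a ≤ s)) = j + 1 := by
      rw [List.countP_eq_length.2, List.length_take, min_eq_left hj]
      intro a ha
      rw [List.mem_take_iff_getElem] at ha
      obtain ⟨i, hi, rfl⟩ := ha
      simp only [decide_eq_true_eq]
      have : l[i] ≤ l[j] := by
        rcases Nat.lt_or_ge i j with h' | h'
        · exact hl.rel_get_of_lt (a := ⟨i, by omega⟩) (b := ⟨j, hj⟩) h'
        · have : i = j := by omega
          subst this; exact le_refl _
      exact this.trans h
    omega
  · intro h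
    by_contra hc
    push_neg at hc
    have h1 : l.countP (fun a => decide (a ≤ s)) =
        (l.take j).countP (fun a => decide (a ≤ s)) +
        (l.drop j).countP (fun a => decide (a ≤ s)) := by
      rw [← List.countP_append, List.take_append_drop]
    have h2 : (l.drop j).countP (fun a => decide (a ≤ s)) = 0 := by
      rw [List.countP_eq_zero]
      intro a ha
      obtain ⟨i, hi, rfl⟩ := List.getElem_of_mem ha
      have hji : j + i < l.length := by
        rw [List.length_drop] at hi; omega
      have hev : (List.drop j l)[i] = l.get ⟨j + i, hji⟩ := by
        rw [List.getElem_drop]; rfl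
      rw [hev]
      simp only [decide_eq_true_eq, not_le]
      have hle : l.get ⟨j, hj⟩ ≤ l.get ⟨j + i, hji⟩ :=
        hl.rel_get_of_le (by simp [Fin.le_def])
      have hcj : l[j] = l.get ⟨j, hj⟩ := rfl
      rw [hcj] at hc
      linarith
    have h3 : (l.take j).countP (fun a => decide (a ≤ s)) ≤ j := by
      calc _ ≤ (l.take j).length := List.countP_le_length
        _ ≤ j := by simp [List.length_take]
    omega

lemma orderStat_le_iff {m : ℕ} (x : Fin m → ℝ) {k : ℕ} (hk1 : 1 ≤ k) (hk : k ≤ m) (s : ℝ) :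
    orderStat x k ≤ s ↔ k ≤ (Finset.univ.filter (fun i => x i ≤ s)).card := by
  set l := Multiset.sort (Multiset.map x Finset.univ.val) (· ≤ ·) with hldef
  have hlen : l.length = m := by
    simp [hldef]
  have hj : k - 1 < l.length := by omega
  have hcount : l.countP (fun a => decide (a ≤ s)) =
      (Finset.univ.filter (fun i => x i ≤ s)).card := by
    have : (l : Multiset ℝ) = Multiset.map x Finset.univ.val := Multiset.sort_eq _ _
    rw [show l.countP (fun a => decide (a ≤ s)) =
        Multiset.countP (fun a => a ≤ s) (l : Multiset ℝ) from rfl, this]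
    rw [Multiset.countP_map]
    rfl
  have := sorted_getElem_le_iff (Multiset.pairwise_sort _ _) hj s
  rw [hcount] at this
  unfold orderStat
  rw [← hldef, List.getD_eq_getElem l 0 hj, this]
  omega


lemma hoeffding_mgf_aux (θ : ℝ) (hθ0 : 0 ≤ θ) (hθ1 : θ ≤ 1) (t : ℝ) :
    θ * Real.exp (t * (1 - θ)) + (1 - θ) * Real.exp (-(t * θ)) ≤ Real.exp (t ^ 2 / 8) := by
  set f : ℝ → ℝ := fun u => θ * Real.exp (u * (1 - θ)) + (1 - θ) * Real.exp (-(u * θ)) with hfdef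
  have hfpos : ∀ u, 0 < f u := by
    intro u
    have h1 := Real.exp_pos (u * (1 - θ))
    have h2 := Real.exp_pos (-(u * θ))
    simp only [hfdef]
    rcases le_total (Real.exp (u * (1 - θ))) (Real.exp (-(u * θ))) with h | h
    · nlinarith [mul_nonneg (sub_nonneg.2 hθ1) (sub_nonneg.2 h)]
    · nlinarith [mul_nonneg hθ0 (sub_nonneg.2 h)]
  set d1 : ℝ → ℝ := fun u => θ * (1 - θ) * (Real.exp (u * (1 - θ)) - Real.exp (-(u * θ)))
    with hd1def
  have hfd : ∀ u, HasDerivAt f (d1 u) u := by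
    intro u
    have h1 : HasDerivAt (fun u : ℝ => u * (1 - θ)) (1 - θ) u := by
      simpa using (hasDerivAt_id u).mul_const (1 - θ)
    have h2 : HasDerivAt (fun u : ℝ => -(u * θ)) (-θ) u := by
      simpa [Pi.neg_def] using ((hasDerivAt_id u).mul_const θ).neg
    have := ((h1.exp.const_mul θ).add (h2.exp.const_mul (1 - θ)))
    exact this.congr_deriv (by simp only [hd1def]; ring)
  set d2 : ℝ → ℝ := fun u => θ * (1 - θ) *
      ((1 - θ) * Real.exp (u * (1 - θ)) + θ * Real.exp (-(u * θ))) with hd2def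
  have hd1d : ∀ u, HasDerivAt d1 (d2 u) u := by
    intro u
    have h1 : HasDerivAt (fun u : ℝ => u * (1 - θ)) (1 - θ) u := by
      simpa using (hasDerivAt_id u).mul_const (1 - θ)
    have h2 : HasDerivAt (fun u : ℝ => -(u * θ)) (-θ) u := by
      simpa [Pi.neg_def] using ((hasDerivAt_id u).mul_const θ).neg
    have := (h1.exp.sub h2.exp).const_mul (θ * (1 - θ))
    exact this.congr_deriv (by simp only [hd2def]; ring)
  set φ : ℝ → ℝ := fun u => u / 4 - d1 u / f u with hφdef
  have hφd : ∀ u, HasDerivAt φ (1 / 4 - (d2 u * f u - d1 u * d1 u) / (f u) ^ 2) u := by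
    intro u
    have h1 : HasDerivAt (fun u : ℝ => u / 4) (1 / 4) u := by
      simpa using (hasDerivAt_id u).div_const 4
    exact h1.sub ((hd1d u).div (hfd u) (hfpos u).ne')
  have hkey : ∀ u, d2 u * f u - d1 u * d1 u ≤ (f u) ^ 2 / 4 := by
    intro u
    set A := Real.exp (u * (1 - θ))
    set B := Real.exp (-(u * θ))
    have hA : 0 < A := Real.exp_pos _
    have hB : 0 < B := Real.exp_pos _
    have hexp : d2 u * f u - d1 u * d1 u = θ * (1 - θ) * A * B := by
      simp only [hfdef, hd1def, hd2def]; ring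
    rw [hexp]
    have h4 : 4 * (θ * (1 - θ) * A * B) ≤ (θ * A + (1 - θ) * B) ^ 2 := by
      nlinarith [sq_nonneg (θ * A - (1 - θ) * B)]
    have : f u = θ * A + (1 - θ) * B := rfl
    rw [this]; linarith
  have hφ'nonneg : ∀ u, 0 ≤ 1 / 4 - (d2 u * f u - d1 u * d1 u) / (f u) ^ 2 := by
    intro u
    have hne2 : (f u) ^ 2 ≠ 0 := pow_ne_zero 2 (hfpos u).ne'
    have h1 : (d2 u * f u - d1 u * d1 u) / (f u) ^ 2 ≤ ((f u) ^ 2 / 4) / (f u) ^ 2 := by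
      apply div_le_div_of_nonneg_right (hkey u) ?_ |>.trans_eq rfl
      positivity
    have h2 : ((f u) ^ 2 / 4) / (f u) ^ 2 = 1 / 4 := by
      rw [div_right_comm, div_self hne2]
    linarith
  have hφmono : Monotone φ :=
    monotone_of_deriv_nonneg (fun u => (hφd u).differentiableAt)
      (fun u => by rw [(hφd u).deriv]; exact hφ'nonneg u)
  have hφ0 : φ 0 = 0 := by
    simp [hφdef, hd1def]
  set g : ℝ → ℝ := fun u => u ^ 2 / 8 - Real.log (f u) with hgdef
  have hgd : ∀ u, HasDerivAt g (φ u) u := by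
    intro u
    have h1 : HasDerivAt (fun u : ℝ => u ^ 2 / 8) (u / 4) u := by
      have := (hasDerivAt_pow 2 u).div_const 8
      exact this.congr_deriv (by norm_num; ring)
    exact h1.sub (((hfd u).log (hfpos u).ne'))
  have hg0 : g 0 = 0 := by
    simp [hgdef, hfdef]
  have hgnonneg : 0 ≤ g t := by
    rcases le_total 0 t with ht | ht
    · have hmono : MonotoneOn g (Set.Ici 0) := by
        apply monotoneOn_of_deriv_nonneg (convex_Ici 0)
          (fun u _ => ((hgd u).differentiableAt).continuousAt.continuousWithinAt)
          (fun u _ => ((hgd u).differentiableAt).differentiableWithinAt)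
        intro u hu
        rw [(hgd u).deriv]
        rw [interior_Ici] at hu
        have : φ 0 ≤ φ u := hφmono (le_of_lt hu)
        linarith [hφ0]
      have := hmono (Set.self_mem_Ici) (Set.mem_Ici.2 ht) ht
      linarith [hg0]
    · have hanti : AntitoneOn g (Set.Iic 0) := by
        apply antitoneOn_of_deriv_nonpos (convex_Iic 0)
          (fun u _ => ((hgd u).differentiableAt).continuousAt.continuousWithinAt)
          (fun u _ => ((hgd u).differentiableAt).differentiableWithinAt)
        intro u hu
        rw [(hgd u).deriv]
        rw [interior_Iic] at hu
        have : φ u ≤ φ 0 := hφmono (le_of_lt hu)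
        linarith [hφ0]
      have := hanti (Set.mem_Iic.2 ht) (Set.self_mem_Iic) ht
      linarith [hg0]
  have hlog : Real.log (f t) ≤ t ^ 2 / 8 := by
    simp only [hgdef] at hgnonneg; linarith
  calc f t = Real.exp (Real.log (f t)) := (Real.exp_log (hfpos t)).symm
    _ ≤ Real.exp (t ^ 2 / 8) := Real.exp_le_exp.2 hlog


lemma exp_ind_eq {Ω : Type*} (A : Set Ω) (θ t : ℝ) (ω : Ω) :
    Real.exp (t * (A.indicator (fun _ => (1:ℝ)) ω - θ)) =
      A.indicator (fun _ => Real.exp (t * (1 - θ))) ω +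
      Aᶜ.indicator (fun _ => Real.exp (-(t * θ))) ω := by
  by_cases h : ω ∈ A
  · have h' : ω ∉ Aᶜ := by simpa using h
    simp [Set.indicator_of_mem h, Set.indicator_of_notMem h']
  · have h' : ω ∈ Aᶜ := by simpa using h
    simp [Set.indicator_of_notMem h, Set.indicator_of_mem h']

lemma integrable_exp_ind {Ω : Type*} [MeasurableSpace Ω] (μ : Measure Ω) [IsProbabilityMeasure μ]
    (A : Set Ω) (hA : MeasurableSet A) (θ t : ℝ) :
    Integrable (fun ω => Real.exp (t * (A.indicator (fun _ => (1:ℝ)) ω - θ))) μ := by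
  have h : (fun ω => Real.exp (t * (A.indicator (fun _ => (1:ℝ)) ω - θ))) =
      (fun ω => A.indicator (fun _ => Real.exp (t * (1 - θ))) ω +
        Aᶜ.indicator (fun _ => Real.exp (-(t * θ))) ω) := by
    funext ω; exact exp_ind_eq A θ t ω
  rw [h]
  exact ((integrable_const _).indicator hA).add ((integrable_const _).indicator hA.compl)

lemma mgf_ind {Ω : Type*} [MeasurableSpace Ω] (μ : Measure Ω) [IsProbabilityMeasure μ]
    (A : Set Ω) (hA : MeasurableSet A) (θ t : ℝ) (hθ : (μ A).toReal = θ) :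
    mgf (fun ω => A.indicator (fun _ => (1:ℝ)) ω - θ) μ t =
      θ * Real.exp (t * (1 - θ)) + (1 - θ) * Real.exp (-(t * θ)) := by
  have hcompl : (μ Aᶜ).toReal = 1 - θ := by
    rw [measure_compl hA (measure_ne_top μ A), measure_univ, ← hθ]
    rw [ENNReal.toReal_sub_of_le prob_le_one ENNReal.one_ne_top]
    simp
  unfold mgf
  have h : (fun ω => Real.exp (t * (A.indicator (fun _ => (1:ℝ)) ω - θ))) =
      (fun ω => A.indicator (fun _ => Real.exp (t * (1 - θ))) ω +
        Aᶜ.indicator (fun _ => Real.exp (-(t * θ))) ω) := by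
    funext ω; exact exp_ind_eq A θ t ω
  rw [show (fun x => Real.exp (t * (fun ω => A.indicator (fun _ => (1:ℝ)) ω - θ) x)) =
      (fun ω => A.indicator (fun _ => Real.exp (t * (1 - θ))) ω +
        Aᶜ.indicator (fun _ => Real.exp (-(t * θ))) ω) from h]
  rw [integral_add ((integrable_const _).indicator hA)
    ((integrable_const _).indicator hA.compl)]
  rw [integral_indicator_const _ hA, integral_indicator_const _ hA.compl, measureReal_def,
    measureReal_def, hθ, hcompl]
  simp [mul_comm]


lemma hoeffding_tail {Ω : Type*} [MeasurableSpace Ω] (μ : Measure Ω) [IsProbabilityMeasure μ]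
    {m : ℕ} (hm : 1 ≤ m) (W : Fin m → Ω → ℝ) (hWmeas : ∀ i, Measurable (W i))
    (hind : iIndepFun W μ)
    (hint : ∀ i t, Integrable (fun ω => Real.exp (t * W i ω)) μ)
    (hmgf : ∀ i t, mgf (W i) μ t ≤ Real.exp (t ^ 2 / 8))
    (a : ℝ) (ha : 0 ≤ a) :
    μ {ω | a ≤ ∑ i, W i ω} ≤ ENNReal.ofReal (Real.exp (-2 * a ^ 2 / m)) := by
  have hmpos : (0 : ℝ) < m := by exact_mod_cast hm
  set lam : ℝ := 4 * a / m with hlam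
  have hlam0 : 0 ≤ lam := by positivity
  have hintsum : Integrable (fun ω => Real.exp (lam * (∑ i, W i) ω)) μ :=
    hind.integrable_exp_mul_sum hWmeas (fun i _ => hint i lam)
  have hcher := measure_ge_le_exp_mul_mgf (μ := μ) (X := ∑ i, W i) a hlam0 hintsum
  have hprod : mgf (∑ i, W i) μ lam = ∏ i, mgf (W i) μ lam :=
    hind.mgf_sum hWmeas Finset.univ
  have hprodle : ∏ i : Fin m, mgf (W i) μ lam ≤ Real.exp (m * lam ^ 2 / 8) := by
    calc ∏ i : Fin m, mgf (W i) μ lam ≤ ∏ _i : Fin m, Real.exp (lam ^ 2 / 8) :=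
          Finset.prod_le_prod (fun i _ => mgf_nonneg) (fun i _ => hmgf i lam)
      _ = Real.exp (m * lam ^ 2 / 8) := by
          rw [Finset.prod_const, ← Real.exp_nat_mul]
          congr 1
          simp [Finset.card_univ]
          ring
  have hfinal : (μ {ω | a ≤ (∑ i, W i) ω}).toReal ≤ Real.exp (-2 * a ^ 2 / m) := by
    calc (μ {ω | a ≤ (∑ i, W i) ω}).toReal
        ≤ Real.exp (-lam * a) * mgf (∑ i, W i) μ lam := hcher
      _ ≤ Real.exp (-lam * a) * Real.exp (m * lam ^ 2 / 8) := by
          apply mul_le_mul_of_nonneg_left _ (Real.exp_pos _).le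
          rw [hprod]; exact hprodle
      _ = Real.exp (-lam * a + m * lam ^ 2 / 8) := (Real.exp_add _ _).symm
      _ = Real.exp (-2 * a ^ 2 / m) := by
          congr 1
          rw [hlam]; field_simp
          ring
  have : μ {ω | a ≤ ∑ i, W i ω} = μ {ω | a ≤ (∑ i, W i) ω} := by
    congr 1; ext ω; simp
  rw [this, ← ENNReal.ofReal_toReal (measure_ne_top μ _)]
  exact ENNReal.ofReal_le_ofReal hfinal

section CountTail

variable {Ω : Type*} [MeasurableSpace Ω] (μ : Measure Ω) [IsProbabilityMeasure μ]
  {m : ℕ} (hm : 1 ≤ m) (X : Fin m → Ω → ℝ) (hmeas : ∀ i, Measurable (X i))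
  (hindep : iIndepFun X μ) (c θ : ℝ)
  (hθ : ∀ i, (μ {ω | X i ω ≤ c}).toReal = θ)

lemma ind_comp (i : Fin m) : (fun ω => ({ω | X i ω ≤ c} : Set Ω).indicator (fun _ => (1:ℝ)) ω)
    = (fun ω => (Set.Iic c).indicator (fun _ => (1:ℝ)) (X i ω)) := by
  funext ω
  by_cases h : X i ω ≤ c
  · simp [Set.indicator_apply, Set.mem_setOf_eq, Set.mem_Iic, h]
  · simp [Set.indicator_apply, Set.mem_setOf_eq, Set.mem_Iic, h]

include hm hmeas hindep hθ in
lemma count_tails (a : ℝ) (ha : 0 ≤ a) :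
    μ {ω | (m:ℝ) * θ + a ≤ ∑ i, (Set.Iic c).indicator (fun _ => (1:ℝ)) (X i ω)} ≤
        ENNReal.ofReal (Real.exp (-2 * a ^ 2 / m)) ∧
    μ {ω | ∑ i, (Set.Iic c).indicator (fun _ => (1:ℝ)) (X i ω) ≤ (m:ℝ) * θ - a} ≤
        ENNReal.ofReal (Real.exp (-2 * a ^ 2 / m)) := by
  have hθ0 : 0 ≤ θ := (hθ ⟨0, hm⟩) ▸ ENNReal.toReal_nonneg
  have hθ1 : θ ≤ 1 := by
    rw [← hθ ⟨0, hm⟩]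
    exact (ENNReal.toReal_le_toReal (measure_ne_top _ _) ENNReal.one_ne_top).2 prob_le_one |>.trans
      (by simp)
  have hA : ∀ i, MeasurableSet ({ω | X i ω ≤ c} : Set Ω) := fun i =>
    (hmeas i) measurableSet_Iic
  -- the centered indicator viewed as g ∘ X i
  set g : ℝ → ℝ := fun x => (Set.Iic c).indicator (fun _ => (1:ℝ)) x - θ with hgdef
  have hgmeas : Measurable g :=
    (measurable_const.indicator measurableSet_Iic).sub measurable_const
  set W : Fin m → Ω → ℝ := fun i ω => (Set.Iic c).indicator (fun _ => (1:ℝ)) (X i ω) - θ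
    with hWdef
  have hWg : ∀ i, W i = g ∘ X i := fun i => rfl
  have hWmeas : ∀ i, Measurable (W i) := fun i => hgmeas.comp (hmeas i)
  have hWindep : iIndepFun W μ :=
    hindep.comp (fun _ => g) (fun _ => hgmeas)
  have hWrw : ∀ i, W i = fun ω => ({ω | X i ω ≤ c} : Set Ω).indicator (fun _ => (1:ℝ)) ω - θ := by
    intro i; funext ω
    simp only [hWdef]
    rw [← congrFun (ind_comp X c i) ω]
  have hWint : ∀ i t, Integrable (fun ω => Real.exp (t * W i ω)) μ := by
    intro i t
    have := integrable_exp_ind μ _ (hA i) θ t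
    refine this.congr ?_
    filter_upwards with ω
    rw [hWrw i]
  have hWmgf : ∀ i t, mgf (W i) μ t ≤ Real.exp (t ^ 2 / 8) := by
    intro i t
    rw [hWrw i, mgf_ind μ _ (hA i) θ t (hθ i)]
    exact hoeffding_mgf_aux θ hθ0 hθ1 t
  -- negated family
  set W' : Fin m → Ω → ℝ := fun i ω => θ - (Set.Iic c).indicator (fun _ => (1:ℝ)) (X i ω)
    with hW'def
  have hW'neg : ∀ i, W' i = -(W i) := by
    intro i; funext ω; simp [hWdef, hW'def]
  have hW'meas : ∀ i, Measurable (W' i) := fun i => (hW'neg i) ▸ (hWmeas i).neg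
  have hW'indep : iIndepFun W' μ :=
    hindep.comp (fun _ => fun x => θ - (Set.Iic c).indicator (fun _ => (1:ℝ)) x)
      (fun _ => measurable_const.sub (measurable_const.indicator measurableSet_Iic))
  have hW'int : ∀ i t, Integrable (fun ω => Real.exp (t * W' i ω)) μ := by
    intro i t
    refine (hWint i (-t)).congr ?_
    filter_upwards with ω
    rw [hW'neg i]
    simp only [Pi.neg_apply]
    ring_nf
  have hW'mgf : ∀ i t, mgf (W' i) μ t ≤ Real.exp (t ^ 2 / 8) := by
    intro i t
    rw [hW'neg i, mgf_neg]
    calc mgf (W i) μ (-t) ≤ Real.exp ((-t) ^ 2 / 8) := hWmgf i (-t)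
      _ = Real.exp (t ^ 2 / 8) := by rw [neg_pow]; ring_nf
  have hsum : ∀ ω, ∑ i, W i ω = (∑ i, (Set.Iic c).indicator (fun _ => (1:ℝ)) (X i ω)) - m * θ := by
    intro ω
    rw [hWdef]
    simp only
    rw [Finset.sum_sub_distrib, Finset.sum_const, Finset.card_univ, Fintype.card_fin]
    simp [nsmul_eq_mul]
  have hsum' : ∀ ω, ∑ i, W' i ω = m * θ - ∑ i, (Set.Iic c).indicator (fun _ => (1:ℝ)) (X i ω) := by
    intro ω
    have h1 : ∑ i, W' i ω = -∑ i, W i ω := by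
      rw [← Finset.sum_neg_distrib]
      exact Finset.sum_congr rfl (fun i _ => by rw [hW'neg i]; simp)
    rw [h1, hsum]; ring
  constructor
  · have hset : {ω | (m:ℝ) * θ + a ≤ ∑ i, (Set.Iic c).indicator (fun _ => (1:ℝ)) (X i ω)} =
        {ω | a ≤ ∑ i, W i ω} := by
      ext ω; simp only [Set.mem_setOf_eq, hsum ω]; constructor <;> intro h <;> linarith
    rw [hset]
    exact hoeffding_tail μ hm W hWmeas hWindep hWint hWmgf a ha
  · have hset : {ω | ∑ i, (Set.Iic c).indicator (fun _ => (1:ℝ)) (X i ω) ≤ (m:ℝ) * θ - a} =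
        {ω | a ≤ ∑ i, W' i ω} := by
      ext ω; simp only [Set.mem_setOf_eq, hsum' ω]; constructor <;> intro h <;> linarith
    rw [hset]
    exact hoeffding_tail μ hm W' hW'meas hW'indep hW'int hW'mgf a ha

end CountTail


/-- **Buffer-size theorem: coverage tracking (Theorem 2).**
Let `X 0, …, X (m-1)` be i.i.d. real random variables with continuous common CDF `F`, let
`k = ⌈m(1-α)⌉ ≤ m`, and let `q̂` be the `k`-th order statistic. Then with probability at
least `1 - δ`, `|F(q̂) - (1-α)| ≤ √(log(2/δ)/(2m)) + 1/m`. -/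
theorem buffer_size_coverage_tracking
    {Ω : Type*} [MeasurableSpace Ω] (μ : Measure Ω) [IsProbabilityMeasure μ]
    (α : ℝ) (hα : α ∈ Set.Ioo (0 : ℝ) 1)
    (m : ℕ) (hm : 1 ≤ m) (X : Fin m → Ω → ℝ) (hmeas : ∀ i, Measurable (X i))
    (hindep : iIndepFun X μ)
    (F : ℝ → ℝ) (hF : ∀ i t, F t = (μ {ω | X i ω ≤ t}).toReal) (hFcont : Continuous F)
    (k : ℕ) (hkdef : k = ⌈(m : ℝ) * (1 - α)⌉₊) (hk : k ≤ m) :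
    ∀ δ ∈ Set.Ioo (0 : ℝ) 1,
      ENNReal.ofReal (1 - δ) ≤
        μ {ω | |F (orderStat (fun i => X i ω) k) - (1 - α)| ≤
            Real.sqrt (Real.log (2 / δ) / (2 * (m : ℝ))) + 1 / (m : ℝ)} := by
  rintro δ ⟨hδ0, hδ1⟩
  have hmpos : (0 : ℝ) < m := by exact_mod_cast hm
  have i0 : Fin m := ⟨0, hm⟩
  set p : ℝ := 1 - α with hpdef
  have hp0 : 0 < p := by simp only [hpdef]; linarith [hα.2]
  have hp1 : p < 1 := by simp only [hpdef]; linarith [hα.1]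
  set ε : ℝ := Real.sqrt (Real.log (2 / δ) / (2 * (m : ℝ))) with hεdef
  have hlog0 : 0 ≤ Real.log (2 / δ) := Real.log_nonneg (by rw [le_div_iff₀ hδ0]; linarith)
  have hε0 : 0 ≤ ε := Real.sqrt_nonneg _
  have hεsq : ε ^ 2 = Real.log (2 / δ) / (2 * (m : ℝ)) := Real.sq_sqrt (by positivity)
  -- exponential bound
  have hexp : ∀ a : ℝ, (m : ℝ) * ε ≤ a → Real.exp (-2 * a ^ 2 / m) ≤ δ / 2 := by
    intro a ha
    have hmε : 0 ≤ (m : ℝ) * ε := by positivity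
    have h1 : -2 * a ^ 2 / m ≤ -Real.log (2 / δ) := by
      have h2 : ((m : ℝ) * ε) ^ 2 ≤ a ^ 2 := by nlinarith
      have h4 : ((m : ℝ) * ε) ^ 2 = m * Real.log (2 / δ) / 2 := by
        rw [mul_pow, hεsq]; field_simp
      rw [div_le_iff₀ hmpos]
      linarith [h2, h4]
    calc Real.exp (-2 * a ^ 2 / m) ≤ Real.exp (-Real.log (2 / δ)) := Real.exp_le_exp.2 h1
      _ = δ / 2 := by
          rw [Real.exp_neg, Real.exp_log (by positivity)]
          rw [inv_div]
  -- k facts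
  have hk1 : 1 ≤ k := by
    rw [hkdef]
    exact Nat.one_le_iff_ne_zero.2 (by
      have : 0 < ⌈(m : ℝ) * p⌉₊ := Nat.ceil_pos.2 (by positivity)
      omega)
  have hkge : (m : ℝ) * p ≤ k := by rw [hkdef]; exact Nat.le_ceil _
  have hkle : (k : ℝ) ≤ m * p + 1 := by
    rw [hkdef]
    exact le_of_lt (Nat.ceil_lt_add_one (by positivity))
  -- F facts
  have hFmono : Monotone F := by
    intro a b hab
    rw [hF i0 a, hF i0 b]
    exact ENNReal.toReal_mono (measure_ne_top _ _)
      (measure_mono (fun ω h => le_trans h hab))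
  have hF01 : ∀ t, 0 ≤ F t ∧ F t ≤ 1 := by
    intro t
    rw [hF i0 t]
    refine ⟨ENNReal.toReal_nonneg, ?_⟩
    calc (μ {ω | X i0 ω ≤ t}).toReal ≤ (μ Set.univ).toReal :=
          ENNReal.toReal_mono (measure_ne_top _ _) (measure_mono (Set.subset_univ _))
      _ = 1 := by simp
  -- surjectivity of F onto (0,1)
  have hsurj : ∀ t : ℝ, 0 < t → t < 1 → ∃ c, F c = t := by
    intro t ht0 ht1
    set ν : Measure ℝ := μ.map (X i0) with hνdef
    have hprob : IsProbabilityMeasure ν := Measure.isProbabilityMeasure_map (hmeas i0).aemeasurable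
    have hFcdf : ∀ x, F x = cdf ν x := by
      intro x
      rw [cdf_eq_real, measureReal_def, hνdef, Measure.map_apply (hmeas i0) measurableSet_Iic, hF i0 x]
      rfl
    have htop : Filter.Tendsto F Filter.atTop (nhds 1) := by
      simp only [funext hFcdf]
      exact tendsto_cdf_atTop ν
    have hbot : Filter.Tendsto F Filter.atBot (nhds 0) := by
      simp only [funext hFcdf]
      exact tendsto_cdf_atBot ν
    obtain ⟨a, haF⟩ : ∃ a, F a < t := (hbot.eventually_lt_const ht0).exists
    obtain ⟨b, hbF⟩ : ∃ b, t < F b := (htop.eventually_const_lt ht1).exists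
    have hab : a ≤ b := by
      by_contra hab
      push_neg at hab
      have := hFmono hab.le
      linarith
    have := intermediate_value_Icc hab (hFcont.continuousOn)
    obtain ⟨c, _, hc⟩ := this ⟨haF.le, hbF.le⟩
    exact ⟨c, hc⟩
  -- the good set
  set G : Set Ω := {ω | |F (orderStat (fun i => X i ω) k) - p| ≤ ε + 1 / (m : ℝ)} with hGdef
  -- sums as counts
  have hSum_card : ∀ (c : ℝ) (ω : Ω),
      ∑ i, (Set.Iic c).indicator (fun _ => (1:ℝ)) (X i ω) =
        ((Finset.univ.filter (fun i => X i ω ≤ c)).card : ℝ) := by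
    intro c ω
    rw [← Finset.sum_boole]
    refine Finset.sum_congr rfl (fun i _ => ?_)
    by_cases h : X i ω ≤ c
    · simp [Set.indicator_apply, Set.mem_Iic, h]
    · simp [Set.indicator_apply, Set.mem_Iic, h]
  -- reduce to a bad set
  suffices hB : ∃ B : Set Ω, MeasurableSet B ∧ μ B ≤ ENNReal.ofReal δ ∧ Bᶜ ⊆ G by
    obtain ⟨B, hBmeas, hBle, hBsub⟩ := hB
    calc ENNReal.ofReal (1 - δ) = 1 - ENNReal.ofReal δ := by
          rw [ENNReal.ofReal_sub 1 hδ0.le, ENNReal.ofReal_one]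
      _ ≤ 1 - μ B := tsub_le_tsub_left hBle 1
      _ = μ Bᶜ := (prob_compl_eq_one_sub hBmeas).symm
      _ ≤ μ G := measure_mono hBsub
  -- case analysis on whether the thresholds are in (0,1)
  by_cases hbig : p + ε + 1 / (m : ℝ) < 1
  case neg =>
    -- upper side free
    by_cases hsml : 0 < p - ε - 1 / (m : ℝ)
    case neg =>
      refine ⟨∅, MeasurableSet.empty, by simp, fun ω _ => ?_⟩
      push_neg at hbig hsml
      have h1 := (hF01 (orderStat (fun i => X i ω) k)).1
      have h2 := (hF01 (orderStat (fun i => X i ω) k)).2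
      simp only [hGdef, Set.mem_setOf_eq, abs_le]
      constructor <;> linarith
    case pos =>
      -- only lower bad set
      push_neg at hbig
      obtain ⟨cs, hcs⟩ := hsurj (p - ε - 1 / m) hsml (by linarith)
      have hθs : ∀ i, (μ {ω | X i ω ≤ cs}).toReal = p - ε - 1 / m := fun i =>
        (hF i cs).symm.trans hcs
      set a₂ : ℝ := k - m * (p - ε - 1 / m) with ha₂def
      have ha₂ : (m : ℝ) * ε ≤ a₂ := by
        have hx : (m : ℝ) * (p - ε - 1 / m) = m * p - m * ε - 1 := by field_simp
        simp only [ha₂def, hx]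
        linarith [hkge]
      have ha₂0 : 0 ≤ a₂ := le_trans (by positivity) ha₂
      have hbd := (count_tails μ hm X hmeas hindep cs (p - ε - 1 / m) hθs a₂ ha₂0).1
      refine ⟨_, ?_, le_trans (le_trans hbd (ENNReal.ofReal_le_ofReal (hexp a₂ ha₂)))
        (ENNReal.ofReal_le_ofReal (by linarith)), ?_⟩
      · exact measurableSet_le measurable_const (Finset.measurable_sum Finset.univ (fun i _ =>
          (measurable_const.indicator measurableSet_Iic).comp (hmeas i)))
      · intro ω hω
        simp only [Set.mem_compl_iff, Set.mem_setOf_eq, not_le] at hω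
        have hcount : ((Finset.univ.filter (fun i => X i ω ≤ cs)).card : ℝ) < k := by
          rw [← hSum_card cs ω]
          have : (m : ℝ) * (p - ε - 1 / m) + a₂ = k := by simp only [ha₂def]; ring
          linarith
        have hnotle : ¬ (orderStat (fun i => X i ω) k ≤ cs) := by
          rw [orderStat_le_iff _ hk1 hk]
          intro hcontra
          exact absurd hcount (by push_neg; exact_mod_cast hcontra)
        push_neg at hnotle
        have hFlow : p - ε - 1 / m ≤ F (orderStat (fun i => X i ω) k) := by
          rw [← hcs]; exact hFmono hnotle.le
        have h2 := (hF01 (orderStat (fun i => X i ω) k)).2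
        simp only [hGdef, Set.mem_setOf_eq, abs_le]
        constructor <;> linarith
  case pos =>
    obtain ⟨cb, hcb⟩ := hsurj (p + ε + 1 / m) (by positivity) hbig
    have hθb : ∀ i, (μ {ω | X i ω ≤ cb}).toReal = p + ε + 1 / m := fun i =>
      (hF i cb).symm.trans hcb
    set a₁ : ℝ := m * (p + ε + 1 / m) - ((k : ℝ) - 1) with ha₁def
    have ha₁ : (m : ℝ) * ε ≤ a₁ := by
      have hx : (m : ℝ) * (p + ε + 1 / m) = m * p + m * ε + 1 := by field_simp
      simp only [ha₁def, hx]
      linarith [hkle]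
    have ha₁0 : 0 ≤ a₁ := le_trans (by positivity) ha₁
    have hbd₁ := (count_tails μ hm X hmeas hindep cb (p + ε + 1 / m) hθb a₁ ha₁0).2
    have hB₁meas : MeasurableSet {ω | ∑ i, (Set.Iic cb).indicator (fun _ => (1:ℝ)) (X i ω) ≤
        (m : ℝ) * (p + ε + 1 / m) - a₁} :=
      measurableSet_le (Finset.measurable_sum Finset.univ (fun i _ =>
        (measurable_const.indicator measurableSet_Iic).comp (hmeas i))) measurable_const
    have hB₁sub : {ω | ∑ i, (Set.Iic cb).indicator (fun _ => (1:ℝ)) (X i ω) ≤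
        (m : ℝ) * (p + ε + 1 / m) - a₁}ᶜ ⊆
        {ω | F (orderStat (fun i => X i ω) k) ≤ p + ε + 1 / m} := by
      intro ω hω
      simp only [Set.mem_compl_iff, Set.mem_setOf_eq, not_le] at hω
      have heq₁ : (m : ℝ) * (p + ε + 1 / m) - a₁ = (k : ℝ) - 1 := by simp only [ha₁def]; ring
      have hnat : ((k : ℝ) - 1) < ((Finset.univ.filter (fun i => X i ω ≤ cb)).card : ℝ) := by
        rw [← hSum_card cb ω]; linarith
      have hcastlt : (k : ℝ) < ((Finset.univ.filter (fun i => X i ω ≤ cb)).card : ℝ) + 1 := by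
        linarith
      have hltnat : k < (Finset.univ.filter (fun i => X i ω ≤ cb)).card + 1 := by
        exact_mod_cast hcastlt
      have hcount : k ≤ (Finset.univ.filter (fun i => X i ω ≤ cb)).card := by omega
      have hle : orderStat (fun i => X i ω) k ≤ cb := by
        rw [orderStat_le_iff _ hk1 hk]
        exact hcount
      simp only [Set.mem_setOf_eq]
      rw [← hcb]
      exact hFmono hle
    by_cases hsml : 0 < p - ε - 1 / (m : ℝ)
    case neg =>
      push_neg at hsml
      refine ⟨_, hB₁meas, le_trans (le_trans hbd₁ (ENNReal.ofReal_le_ofReal (hexp a₁ ha₁)))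
        (ENNReal.ofReal_le_ofReal (by linarith)), ?_⟩
      intro ω hω
      have hup := hB₁sub hω
      simp only [Set.mem_setOf_eq] at hup
      have h1 := (hF01 (orderStat (fun i => X i ω) k)).1
      simp only [hGdef, Set.mem_setOf_eq, abs_le]
      constructor <;> linarith
    case pos =>
      obtain ⟨cs, hcs⟩ := hsurj (p - ε - 1 / m) hsml (by linarith [one_div_pos.2 hmpos])
      have hθs : ∀ i, (μ {ω | X i ω ≤ cs}).toReal = p - ε - 1 / m := fun i =>
        (hF i cs).symm.trans hcs
      set a₂ : ℝ := k - m * (p - ε - 1 / m) with ha₂def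
      have ha₂ : (m : ℝ) * ε ≤ a₂ := by
        have hx : (m : ℝ) * (p - ε - 1 / m) = m * p - m * ε - 1 := by field_simp
        simp only [ha₂def, hx]
        linarith [hkge]
      have ha₂0 : 0 ≤ a₂ := le_trans (by positivity) ha₂
      have hbd₂ := (count_tails μ hm X hmeas hindep cs (p - ε - 1 / m) hθs a₂ ha₂0).1
      have hB₂meas : MeasurableSet {ω | (m : ℝ) * (p - ε - 1 / m) + a₂ ≤
          ∑ i, (Set.Iic cs).indicator (fun _ => (1:ℝ)) (X i ω)} :=
        measurableSet_le measurable_const (Finset.measurable_sum Finset.univ (fun i _ =>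
          (measurable_const.indicator measurableSet_Iic).comp (hmeas i)))
      set B₁ : Set Ω := {ω | ∑ i, (Set.Iic cb).indicator (fun _ => (1:ℝ)) (X i ω) ≤
          (m : ℝ) * (p + ε + 1 / m) - a₁} with hB₁def
      set B₂ : Set Ω := {ω | (m : ℝ) * (p - ε - 1 / m) + a₂ ≤
          ∑ i, (Set.Iic cs).indicator (fun _ => (1:ℝ)) (X i ω)} with hB₂def
      refine ⟨B₁ ∪ B₂, hB₁meas.union hB₂meas, ?_, ?_⟩
      · calc μ (B₁ ∪ B₂) ≤ μ B₁ + μ B₂ := measure_union_le _ _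
          _ ≤ ENNReal.ofReal (δ / 2) + ENNReal.ofReal (δ / 2) := by
              exact add_le_add (le_trans hbd₁ (ENNReal.ofReal_le_ofReal (hexp a₁ ha₁)))
                (le_trans hbd₂ (ENNReal.ofReal_le_ofReal (hexp a₂ ha₂)))
          _ = ENNReal.ofReal δ := by
              rw [← ENNReal.ofReal_add (by linarith) (by linarith)]
              norm_num
      · intro ω hω
        rw [Set.compl_union] at hω
        obtain ⟨hω₁, hω₂⟩ := hω
        have hup := hB₁sub hω₁
        simp only [Set.mem_setOf_eq] at hup
        simp only [hB₂def, Set.mem_compl_iff, Set.mem_setOf_eq, not_le] at hω₂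
        have hcount : ((Finset.univ.filter (fun i => X i ω ≤ cs)).card : ℝ) < k := by
          rw [← hSum_card cs ω]
          have : (m : ℝ) * (p - ε - 1 / m) + a₂ = k := by simp only [ha₂def]; ring
          linarith
        have hnotle : ¬ (orderStat (fun i => X i ω) k ≤ cs) := by
          rw [orderStat_le_iff _ hk1 hk]
          intro hcontra
          exact absurd hcount (by push_neg; exact_mod_cast hcontra)
        push_neg at hnotle
        have hFlow : p - ε - 1 / m ≤ F (orderStat (fun i => X i ω) k) := by
          rw [← hcs]; exact hFmono hnotle.le
        simp only [hGdef, Set.mem_setOf_eq, abs_le]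
        constructor <;> linarith
end

section
/- Let μ₁, …, μ_k be probability measures on ℝ, let μ̄ = (1/k)·Σ_{j=1}^k μ_j, let α ∈ (0,1) and m ≥ 1 with r := ⌈(m + 1)(1 − α)⌉ ≤ m. Let S₁, …, S_m be i.i.d. random variables with law μ̄, let q̂ be the r-th order statistic of S₁, …, S_m, and let T be a random variable with law μ_j, independent of (S₁, …, S_m), for some j ∈ {1, …, k}. Then P(T ≤ q̂) ≥ (1 − α) − TV(μ_j, μ̄). -/
open MeasureTheory ProbabilityTheory

/-- Total variation distance between two measures:
`TV(P, Q) = sup over measurable sets A of `|P(A) - Q(A)|`. -/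
noncomputable def tvDist {Ω : Type*} [MeasurableSpace Ω] (P Q : Measure Ω) : ℝ :=
  ⨆ A : {A : Set Ω // MeasurableSet A}, |(P A.1).toReal - (Q A.1).toReal|

section Aux

open Finset ENNReal

lemma sorted_le_get_iff {l : List ℝ} (hs : l.Pairwise (· ≤ ·)) {k : ℕ} (hk : k < l.length)
    (t : ℝ) : t ≤ l.get ⟨k, hk⟩ ↔ l.countP (fun a => decide (a < t)) ≤ k := by
  constructor
  · intro ht
    by_contra hc
    push_neg at hc
    have hsplit : l.countP (fun a => decide (a < t)) =
        (l.take k).countP (fun a => decide (a < t)) + (l.drop k).countP (fun a => decide (a < t)) := by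
      rw [← List.countP_append, List.take_append_drop]
    have h1 : (l.take k).countP (fun a => decide (a < t)) ≤ k := by
      calc (l.take k).countP (fun a => decide (a < t)) ≤ (l.take k).length := List.countP_le_length
        _ ≤ k := by simp [List.length_take]
    have h2 : (l.drop k).countP (fun a => decide (a < t)) = 0 := by
      rw [List.countP_eq_zero]
      intro a ha
      obtain ⟨i, hi, rfl⟩ := List.mem_iff_getElem.1 ha
      have hlen' : k + i < l.length := by
        simp only [List.length_drop] at hi; omega
      have hgi : (List.drop k l)[i] = l.get ⟨k + i, hlen'⟩ := by
        rw [List.getElem_drop, List.get_eq_getElem]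
      rw [hgi]
      simp only [decide_eq_true_eq, not_lt]
      exact le_trans ht (hs.rel_get_of_le (by simp [Fin.le_def]))
    omega
  · intro hc
    by_contra ht
    push_neg at ht
    have hall : ∀ a ∈ l.take (k+1), a < t := by
      intro a ha
      obtain ⟨i, hi, rfl⟩ := List.mem_iff_getElem.1 ha
      have hlen' : i < l.length := by
        simp only [List.length_take] at hi; omega
      have hgi : (List.take (k+1) l)[i] = l.get ⟨i, hlen'⟩ := by
        rw [List.getElem_take, List.get_eq_getElem]
      rw [hgi]
      calc l.get ⟨i, hlen'⟩ ≤ l.get ⟨k, hk⟩ := by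
            apply hs.rel_get_of_le
            simp only [List.length_take] at hi
            simp only [Fin.le_def]; omega
        _ < t := ht
    have : (l.take (k+1)).countP (fun a => decide (a < t)) = (l.take (k+1)).length := by
      rw [List.countP_eq_length]
      intro a ha; simpa using hall a ha
    have hlen : (l.take (k+1)).length = k+1 := by simp [List.length_take]; omega
    have hsplit : (l.take (k+1)).countP (fun a => decide (a < t)) ≤ l.countP (fun a => decide (a < t)) := by
      conv_rhs => rw [← List.take_append_drop (k+1) l]
      rw [List.countP_append]; omega
    omega

lemma le_orderStat_iff {m : ℕ} (x : Fin m → ℝ) {r : ℕ} (hr1 : 1 ≤ r) (hrm : r ≤ m)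
    (t : ℝ) : t ≤ orderStat x r ↔ (univ.filter fun i => x i < t).card ≤ r - 1 := by
  set l := Multiset.sort (Multiset.map x Finset.univ.val) (· ≤ ·) with hl
  have hlen : l.length = m := by
    rw [hl, Multiset.length_sort]
    simp
  have hsorted : l.Pairwise (· ≤ ·) := Multiset.pairwise_sort _ _
  have hklt : r - 1 < l.length := by omega
  have hcount : l.countP (fun a => decide (a < t)) = (univ.filter fun i => x i < t).card := by
    calc l.countP (fun a => decide (a < t))
        = Multiset.countP (fun a => a < t) (l : Multiset ℝ) := (Multiset.coe_countP _ _).symm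
      _ = Multiset.countP (fun a => a < t) (Multiset.map x Finset.univ.val) := by
          rw [hl, Multiset.sort_eq]
      _ = Multiset.card (Multiset.filter (fun i => x i < t) Finset.univ.val) :=
          Multiset.countP_map x Finset.univ.val (fun a => a < t)
      _ = (univ.filter fun i => x i < t).card := by
          rw [Finset.card_def, Finset.filter_val]
  rw [orderStat, ← hl, List.getD_eq_getElem l 0 hklt, ← hcount]
  exact (sorted_le_get_iff hsorted hklt t)

lemma card_low_rank {n : ℕ} (x : Fin n → ℝ) {r : ℕ} (hr1 : 1 ≤ r) (hrn : r ≤ n) :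
    r ≤ (univ.filter fun l => (univ.filter fun i => x i < x l).card ≤ r - 1).card := by
  have hn : 0 < n := lt_of_lt_of_le hr1 hrn
  set Smax : Finset (Fin n) := univ.filter fun l => r ≤ (univ.filter fun i => x i ≤ x l).card with hS
  have hSne : Smax.Nonempty := by
    obtain ⟨l⟩ := Fin.pos_iff_nonempty.1 hn
    obtain ⟨lm, _, hlm⟩ := Finset.exists_max_image univ x ⟨l, mem_univ l⟩
    refine ⟨lm, ?_⟩
    rw [hS, mem_filter]
    refine ⟨mem_univ _, ?_⟩
    have : (univ.filter fun i => x i ≤ x lm) = univ := by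
      apply Finset.filter_true_of_mem
      intro i _; exact hlm i (mem_univ i)
    rw [this, card_univ, Fintype.card_fin]; exact hrn
  obtain ⟨l₀, hl₀S, hl₀min⟩ := Finset.exists_min_image Smax x hSne
  have hclaim1 : (univ.filter fun i => x i < x l₀).card ≤ r - 1 := by
    by_contra hc
    push_neg at hc
    have hne : (univ.filter fun i => x i < x l₀).Nonempty := by
      rw [← Finset.card_pos]; omega
    obtain ⟨i₁, hi₁mem, hi₁max⟩ := Finset.exists_max_image _ x hne
    have hi₁lt : x i₁ < x l₀ := (mem_filter.1 hi₁mem).2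
    have hsub : (univ.filter fun i => x i < x l₀) ⊆ (univ.filter fun i => x i ≤ x i₁) := by
      intro i hi
      rw [mem_filter]
      exact ⟨mem_univ _, hi₁max i hi⟩
    have hi₁S : i₁ ∈ Smax := by
      rw [hS, mem_filter]
      refine ⟨mem_univ _, ?_⟩
      calc r ≤ (univ.filter fun i => x i < x l₀).card := by omega
        _ ≤ _ := Finset.card_le_card hsub
    exact absurd (hl₀min i₁ hi₁S) (not_le.2 hi₁lt)
  have hsub2 : (univ.filter fun i => x i ≤ x l₀) ⊆
      (univ.filter fun l => (univ.filter fun i => x i < x l).card ≤ r - 1) := by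
    intro l hl
    rw [mem_filter] at hl ⊢
    refine ⟨mem_univ _, ?_⟩
    calc (univ.filter fun i => x i < x l).card
        ≤ (univ.filter fun i => x i < x l₀).card := by
          apply Finset.card_le_card
          intro i hi
          rw [mem_filter] at hi ⊢
          exact ⟨mem_univ _, lt_of_lt_of_le hi.2 hl.2⟩
      _ ≤ r - 1 := hclaim1
  calc r ≤ (univ.filter fun i => x i ≤ x l₀).card := (mem_filter.1 hl₀S).2
    _ ≤ _ := Finset.card_le_card hsub2

lemma tv_bdd (P Q : Measure ℝ) [IsProbabilityMeasure P] [IsProbabilityMeasure Q] :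
    BddAbove (Set.range fun A : {A : Set ℝ // MeasurableSet A} =>
    |(P A.1).toReal - (Q A.1).toReal|) := by
  refine ⟨2, ?_⟩
  rintro _ ⟨A, rfl⟩
  have h1 : (P A.1).toReal ≤ 1 := by
    rw [← ENNReal.toReal_one]
    exact ENNReal.toReal_mono ENNReal.one_ne_top prob_le_one
  have h2 : (Q A.1).toReal ≤ 1 := by
    rw [← ENNReal.toReal_one]
    exact ENNReal.toReal_mono ENNReal.one_ne_top prob_le_one
  have h3 : 0 ≤ (P A.1).toReal := ENNReal.toReal_nonneg
  have h4 : 0 ≤ (Q A.1).toReal := ENNReal.toReal_nonneg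
  rw [abs_le]; constructor <;> linarith

lemma tvDist_nonneg (P Q : Measure ℝ) [IsProbabilityMeasure P] [IsProbabilityMeasure Q] :
    0 ≤ tvDist P Q := by
  have := le_ciSup (tv_bdd P Q) (⟨∅, MeasurableSet.empty⟩ : {A : Set ℝ // MeasurableSet A})
  simp only [measure_empty] at this
  simp at this; exact this

lemma measure_le_add_tvDist (P Q : Measure ℝ) [IsProbabilityMeasure P] [IsProbabilityMeasure Q]
    {A : Set ℝ} (hA : MeasurableSet A) :
    Q A ≤ P A + ENNReal.ofReal (tvDist P Q) := by
  have h := le_ciSup (tv_bdd P Q) (⟨A, hA⟩ : {A : Set ℝ // MeasurableSet A})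
  have habs : (Q A).toReal - (P A).toReal ≤ tvDist P Q := by
    calc (Q A).toReal - (P A).toReal ≤ |(P A).toReal - (Q A).toReal| := by
          rw [abs_sub_comm]; exact le_abs_self _
      _ ≤ tvDist P Q := h
  have hQfin : Q A ≠ ⊤ := measure_ne_top _ _
  have hPfin : P A ≠ ⊤ := measure_ne_top _ _
  calc Q A = ENNReal.ofReal ((Q A).toReal) := (ENNReal.ofReal_toReal hQfin).symm
    _ ≤ ENNReal.ofReal ((P A).toReal + tvDist P Q) := by
        apply ENNReal.ofReal_le_ofReal; linarith
    _ = ENNReal.ofReal ((P A).toReal) + ENNReal.ofReal (tvDist P Q) :=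
        ENNReal.ofReal_add ENNReal.toReal_nonneg (tvDist_nonneg P Q)
    _ = P A + ENNReal.ofReal (tvDist P Q) := by rw [ENNReal.ofReal_toReal hPfin]

lemma measurable_rankCount' {β : Type*} [MeasurableSpace β] {ι : Type*} [Fintype ι]
    {f : ι → β → ℝ} (hf : ∀ i, Measurable (f i)) {g : β → ℝ} (hg : Measurable g) (c : ℕ) :
    MeasurableSet {b | (univ.filter fun i => f i b < g b).card ≤ c} := by
  have hm : Measurable fun b => (univ.filter fun i => f i b < g b).card := by
    have : (fun b => (univ.filter fun i => f i b < g b).card)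
        = fun b => ∑ i : ι, if f i b < g b then 1 else 0 := by
      funext b; exact Finset.card_filter _ _
    rw [this]
    exact Finset.measurable_sum _ fun i _ =>
      Measurable.ite (measurableSet_lt (hf i) hg) measurable_const measurable_const
  exact hm (MeasurableSet.of_discrete (s := Set.Iic c))

lemma pi_rank_bound (ν : Measure ℝ) [IsProbabilityMeasure ν] (m : ℕ) {r : ℕ}
    (hr1 : 1 ≤ r) (hrn : r ≤ m + 1) :
    (r : ℝ≥0∞) / (m + 1) ≤ (Measure.pi fun _ : Fin (m + 1) => ν)
      {x | (univ.filter fun i => x i < x (Fin.last m)).card ≤ r - 1} := by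
  set π : Measure (Fin (m+1) → ℝ) := Measure.pi fun _ : Fin (m+1) => ν with hπ
  haveI : IsProbabilityMeasure π := by rw [hπ]; infer_instance
  set El : Fin (m+1) → Set (Fin (m+1) → ℝ) :=
    fun l => {x | (univ.filter fun i => x i < x l).card ≤ r - 1} with hEl
  have hElmeas : ∀ l, MeasurableSet (El l) := by
    intro l
    exact measurable_rankCount' (fun i => measurable_pi_apply i) (measurable_pi_apply l) _
  have hsame : ∀ l, π (El l) = π (El (Fin.last m)) := by
    intro l
    set e : Fin (m+1) ≃ Fin (m+1) := Equiv.swap l (Fin.last m) with he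
    have hmp := MeasureTheory.measurePreserving_piCongrLeft (fun _ : Fin (m+1) => ν) e
    set g := MeasurableEquiv.piCongrLeft (fun _ : Fin (m+1) => ℝ) e with hg
    have hgapp : ∀ (x : Fin (m+1) → ℝ) (i : Fin (m+1)), g x i = x (e.symm i) := by
      intro x i
      have := Equiv.piCongrLeft_apply_apply (fun _ : Fin (m+1) => ℝ) e x (e.symm i)
      rw [Equiv.apply_symm_apply] at this
      simp only [hg, MeasurableEquiv.coe_piCongrLeft]
      exact this
    have hpre : g ⁻¹' (El l) = El (Fin.last m) := by
      ext x
      simp only [hEl, Set.mem_preimage, Set.mem_setOf_eq]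
      have hcard : (univ.filter fun i => g x i < g x l).card
          = (univ.filter fun i => x i < x (Fin.last m)).card := by
        rw [Finset.card_filter, Finset.card_filter]
        refine Fintype.sum_equiv e.symm _ _ fun i => ?_
        rw [hgapp x i]
        have hl : e.symm l = Fin.last m := by
          rw [he]; simp [Equiv.swap_apply_left]
        rw [hgapp x l, hl]
      rw [hcard]
    calc π (El l) = π (g ⁻¹' (El l)) := by
          rw [hπ] at *
          exact (hmp.measure_preimage (hElmeas l).nullMeasurableSet).symm
      _ = π (El (Fin.last m)) := by rw [hpre]
  have hsum : (r : ℝ≥0∞) ≤ ∑ l : Fin (m+1), π (El l) := by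
    have hptwise : ∀ x : Fin (m+1) → ℝ,
        (r : ℝ≥0∞) ≤ ∑ l : Fin (m+1), (El l).indicator (1 : (Fin (m+1) → ℝ) → ℝ≥0∞) x := by
      intro x
      have hcard := card_low_rank x hr1 hrn
      have h1 : ∑ l : Fin (m+1), (El l).indicator (1 : (Fin (m+1) → ℝ) → ℝ≥0∞) x
          = ((univ.filter fun l => x ∈ El l).card : ℝ≥0∞) := by
        rw [Finset.card_filter]
        push_cast
        refine Finset.sum_congr rfl fun l _ => ?_
        by_cases h : x ∈ El l <;> simp [h, Set.indicator]
      rw [h1]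
      have h2 : (univ.filter fun l => x ∈ El l) =
          (univ.filter fun l => (univ.filter fun i => x i < x l).card ≤ r - 1) := rfl
      rw [h2]
      exact_mod_cast Nat.cast_le.2 hcard
    calc (r : ℝ≥0∞) = ∫⁻ _, (r : ℝ≥0∞) ∂π := by simp
      _ ≤ ∫⁻ x, ∑ l : Fin (m+1), (El l).indicator 1 x ∂π := lintegral_mono hptwise
      _ = ∑ l : Fin (m+1), ∫⁻ x, (El l).indicator 1 x ∂π :=
          lintegral_finset_sum _ fun l _ => ((measurable_const).indicator (hElmeas l))
      _ = ∑ l : Fin (m+1), π (El l) := by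
          refine Finset.sum_congr rfl fun l _ => ?_
          exact lintegral_indicator_one (hElmeas l)
  have hconst : ∑ l : Fin (m+1), π (El l) = (m + 1 : ℝ≥0∞) * π (El (Fin.last m)) := by
    rw [Finset.sum_congr rfl fun l _ => hsame l]
    simp [Finset.sum_const, mul_comm]
  rw [hconst] at hsum
  rw [ENNReal.div_le_iff_le_mul (Or.inl (by simp)) (Or.inl (by simp [ENNReal.add_eq_top]))]
  calc (r : ℝ≥0∞) ≤ (m + 1 : ℝ≥0∞) * π (El (Fin.last m)) := hsum
    _ = π (El (Fin.last m)) * (m + 1) := mul_comm _ _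

lemma prod_rank_bound (ν : Measure ℝ) [IsProbabilityMeasure ν] (m : ℕ) {r : ℕ}
    (hr1 : 1 ≤ r) (hrn : r ≤ m + 1) :
    (r : ℝ≥0∞) / (m + 1) ≤ ((Measure.pi fun _ : Fin m => ν).prod ν)
      {p : (Fin m → ℝ) × ℝ | (univ.filter fun i => p.1 i < p.2).card ≤ r - 1} := by
  set E : Set ((Fin m → ℝ) × ℝ) :=
    {p | (univ.filter fun i => p.1 i < p.2).card ≤ r - 1} with hE
  have hEmeas : MeasurableSet E :=
    measurable_rankCount' (fun i => (measurable_pi_apply i).comp measurable_fst)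
      measurable_snd _
  have hmp1 := MeasureTheory.measurePreserving_piFinSuccAbove
      (fun _ : Fin (m+1) => ν) (Fin.last m)
  have hmp2 : MeasurePreserving
      (fun x : Fin (m+1) → ℝ => ((fun i : Fin m => x ((Fin.last m).succAbove i)), x (Fin.last m)))
      (Measure.pi fun _ : Fin (m+1) => ν) ((Measure.pi fun _ : Fin m => ν).prod ν) := by
    have hswap : MeasurePreserving (Prod.swap : ℝ × (Fin m → ℝ) → (Fin m → ℝ) × ℝ)
        (ν.prod (Measure.pi fun _ : Fin m => ν)) ((Measure.pi fun _ : Fin m => ν).prod ν) :=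
      Measure.measurePreserving_swap
    have := hswap.comp hmp1
    have happ : (Prod.swap ∘ (MeasurableEquiv.piFinSuccAbove (fun _ : Fin (m+1) => ℝ) (Fin.last m)))
        = fun x : Fin (m+1) → ℝ =>
            ((fun i : Fin m => x ((Fin.last m).succAbove i)), x (Fin.last m)) := by
      funext x
      simp only [Function.comp_apply, MeasurableEquiv.piFinSuccAbove_apply, Prod.swap]
      refine Prod.ext ?_ ?_
      · funext i
        simp [Fin.init, Fin.succAbove_last]
      · simp [Fin.succAbove_last]
    rwa [happ] at this
  have hpre : (fun x : Fin (m+1) → ℝ =>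
      ((fun i : Fin m => x ((Fin.last m).succAbove i)), x (Fin.last m))) ⁻¹' E
      = {x : Fin (m+1) → ℝ | (univ.filter fun i => x i < x (Fin.last m)).card ≤ r - 1} := by
    ext x
    simp only [hE, Set.mem_preimage, Set.mem_setOf_eq]
    have h1 : (univ.filter fun i : Fin (m+1) => x i < x (Fin.last m)).card
        = (univ.filter fun i : Fin m => x ((Fin.last m).succAbove i) < x (Fin.last m)).card := by
      rw [Finset.card_filter, Finset.card_filter, Fin.sum_univ_castSucc]
      simp [Fin.succAbove_last]
    rw [h1]
  calc (r : ℝ≥0∞) / (m + 1)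
      ≤ (Measure.pi fun _ : Fin (m + 1) => ν)
          {x | (univ.filter fun i => x i < x (Fin.last m)).card ≤ r - 1} :=
        pi_rank_bound ν m hr1 hrn
    _ = (Measure.pi fun _ : Fin (m + 1) => ν)
        ((fun x : Fin (m+1) → ℝ =>
          ((fun i : Fin m => x ((Fin.last m).succAbove i)), x (Fin.last m))) ⁻¹' E) := by
        rw [hpre]
    _ = ((Measure.pi fun _ : Fin m => ν).prod ν) E :=
        hmp2.measure_preimage hEmeas.nullMeasurableSet

lemma map_fun_eq_pi {Ω : Type*} [MeasurableSpace Ω] (P : Measure Ω) [IsProbabilityMeasure P]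
    {m : ℕ} (ν : Measure ℝ) [IsProbabilityMeasure ν] (S : Fin m → Ω → ℝ)
    (hSmeas : ∀ i, Measurable (S i))
    (hSindep : iIndepFun S P)
    (hSlaw : ∀ i, Measure.map (S i) P = ν) :
    Measure.map (fun ω => fun i => S i ω) P = Measure.pi fun _ : Fin m => ν := by
  symm
  apply Measure.pi_eq
  intro s hs
  rw [Measure.map_apply (measurable_pi_iff.2 hSmeas) (MeasurableSet.univ_pi hs)]
  have hpre : (fun ω => fun i => S i ω) ⁻¹' (Set.univ.pi s) = ⋂ i ∈ Finset.univ, S i ⁻¹' s i := by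
    ext ω
    simp [Set.mem_univ_pi]
  rw [hpre, hSindep.measure_inter_preimage_eq_mul Finset.univ (fun i _ => hs i)]
  refine Finset.prod_congr rfl fun i _ => ?_
  rw [← hSlaw i, Measure.map_apply (hSmeas i) (hs i)]

end Aux

/-- **Pooled thresholds guarantee only mixture validity (Proposition 3).**
If `q̂` is the `r`-th order statistic (`r = ⌈(m+1)(1-α)⌉ ≤ m`) of `m` i.i.d. calibration
scores with law the uniform mixture `μ̄` of per-task score distributions `μ 0, …, μ (k-1)`,
and `T` is an independent test score with law `μ j`, then
`P(T ≤ q̂) ≥ (1 - α) - TV(μ j, μ̄)`. -/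
theorem pooled_threshold_pertask_coverage
    {Ω : Type*} [MeasurableSpace Ω] (P : Measure Ω) [IsProbabilityMeasure P]
    (k : ℕ) (hk : 1 ≤ k) (μ : Fin k → Measure ℝ) [∀ j, IsProbabilityMeasure (μ j)]
    (μbar : Measure ℝ) (hμbar : μbar = (k : ENNReal)⁻¹ • ∑ j : Fin k, μ j)
    (α : ℝ) (hα : α ∈ Set.Ioo (0 : ℝ) 1) (m : ℕ) (hm : 1 ≤ m)
    (r : ℕ) (hrdef : r = ⌈((m : ℝ) + 1) * (1 - α)⌉₊) (hr : r ≤ m)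
    (S : Fin m → Ω → ℝ) (hSmeas : ∀ i, Measurable (S i))
    (hSindep : iIndepFun S P)
    (hSlaw : ∀ i, Measure.map (S i) P = μbar)
    (j : Fin k) (T : Ω → ℝ) (hTmeas : Measurable T)
    (hTlaw : Measure.map T P = μ j)
    (hTindep : IndepFun T (fun ω => fun i => S i ω) P) :
    (1 - α) - tvDist (μ j) μbar ≤
      (P {ω | T ω ≤ orderStat (fun i => S i ω) r}).toReal := by
  obtain ⟨hα0, hα1⟩ := hα
  haveI hμbarP : IsProbabilityMeasure μbar := by
    constructor
    rw [hμbar]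
    simp only [Measure.smul_apply, Measure.coe_finset_sum, Finset.sum_apply, measure_univ,
      Finset.sum_const, Finset.card_univ, Fintype.card_fin, nsmul_eq_mul, mul_one, smul_eq_mul]
    rw [ENNReal.inv_mul_cancel]
    · exact Nat.cast_ne_zero.2 (by omega)
    · exact ENNReal.natCast_ne_top k
  have hr1 : 1 ≤ r := by
    rw [hrdef]
    rw [Nat.one_le_iff_ne_zero, ← Nat.pos_iff_ne_zero, Nat.ceil_pos]
    have : (0 : ℝ) < (m : ℝ) + 1 := by positivity
    nlinarith
  -- law of the score vector
  have hvec : Measure.map (fun ω => fun i => S i ω) P = Measure.pi fun _ : Fin m => μbar :=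
    map_fun_eq_pi P μbar S hSmeas hSindep hSlaw
  have hpairmeas : Measurable fun ω => ((fun i => S i ω), T ω) :=
    (measurable_pi_iff.2 hSmeas).prodMk hTmeas
  have hpair : Measure.map (fun ω => ((fun i => S i ω), T ω)) P
      = (Measure.pi fun _ : Fin m => μbar).prod (μ j) := by
    have h := (indepFun_iff_map_prod_eq_prod_map_map
      (measurable_pi_iff.2 hSmeas).aemeasurable hTmeas.aemeasurable).1 hTindep.symm
    rw [hvec, hTlaw] at h
    exact h
  set E : Set ((Fin m → ℝ) × ℝ) :=
    {p | (Finset.univ.filter fun i => p.1 i < p.2).card ≤ r - 1} with hE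
  have hEmeas : MeasurableSet E :=
    measurable_rankCount' (fun i => (measurable_pi_apply i).comp measurable_fst)
      measurable_snd _
  have hevent : {ω | T ω ≤ orderStat (fun i => S i ω) r}
      = (fun ω => ((fun i => S i ω), T ω)) ⁻¹' E := by
    ext ω
    simp only [Set.mem_setOf_eq, Set.mem_preimage, hE]
    exact le_orderStat_iff _ hr1 hr _
  have hPevent : P {ω | T ω ≤ orderStat (fun i => S i ω) r}
      = ((Measure.pi fun _ : Fin m => μbar).prod (μ j)) E := by
    rw [hevent, ← hpair, Measure.map_apply hpairmeas hEmeas]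
  -- sections of E are lower intervals
  have hsec : ∀ s : Fin m → ℝ, (Prod.mk s ⁻¹' E) = Set.Iic (orderStat s r) := by
    intro s
    ext t
    simp only [hE, Set.mem_preimage, Set.mem_setOf_eq, Set.mem_Iic]
    exact (le_orderStat_iff s hr1 hr t).symm
  -- compare with the mixture test score via TV
  have hkey : ((Measure.pi fun _ : Fin m => μbar).prod μbar) E ≤
      ((Measure.pi fun _ : Fin m => μbar).prod (μ j)) E
        + ENNReal.ofReal (tvDist (μ j) μbar) := by
    rw [Measure.prod_apply hEmeas, Measure.prod_apply hEmeas]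
    calc ∫⁻ s, μbar (Prod.mk s ⁻¹' E) ∂(Measure.pi fun _ : Fin m => μbar)
        ≤ ∫⁻ s, ((μ j) (Prod.mk s ⁻¹' E) + ENNReal.ofReal (tvDist (μ j) μbar))
            ∂(Measure.pi fun _ : Fin m => μbar) := by
          refine lintegral_mono fun s => ?_
          rw [hsec s]
          exact measure_le_add_tvDist (μ j) μbar measurableSet_Iic
      _ = ∫⁻ s, (μ j) (Prod.mk s ⁻¹' E) ∂(Measure.pi fun _ : Fin m => μbar)
            + ENNReal.ofReal (tvDist (μ j) μbar) := by
          rw [lintegral_add_right _ measurable_const, lintegral_const, measure_univ, mul_one]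
  -- mixture-level coverage via exchangeability
  have hlow : ENNReal.ofReal (1 - α) ≤ ((Measure.pi fun _ : Fin m => μbar).prod μbar) E := by
    have hle : (1 : ℝ) - α ≤ (r : ℝ) / ((m : ℝ) + 1) := by
      have hceil : ((m : ℝ) + 1) * (1 - α) ≤ r := by
        rw [hrdef]
        exact Nat.le_ceil _
      rw [le_div_iff₀ (by positivity)]
      nlinarith
    calc ENNReal.ofReal (1 - α) ≤ ENNReal.ofReal ((r : ℝ) / ((m : ℝ) + 1)) :=
          ENNReal.ofReal_le_ofReal hle
      _ = (r : ENNReal) / ((m : ENNReal) + 1) := by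
          rw [ENNReal.ofReal_div_of_pos (by positivity)]
          norm_num [ENNReal.ofReal_natCast]
          rw [ENNReal.ofReal_add (by positivity) (by norm_num), ENNReal.ofReal_natCast,
            ENNReal.ofReal_one]
      _ ≤ ((Measure.pi fun _ : Fin m => μbar).prod μbar) E :=
          prod_rank_bound μbar m hr1 (by omega)
  -- combine
  have hcomb : ENNReal.ofReal (1 - α) ≤
      P {ω | T ω ≤ orderStat (fun i => S i ω) r} + ENNReal.ofReal (tvDist (μ j) μbar) := by
    rw [hPevent]
    exact le_trans hlow hkey
  have hfin : P {ω | T ω ≤ orderStat (fun i => S i ω) r} ≠ ⊤ := measure_ne_top _ _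
  have htv : 0 ≤ tvDist (μ j) μbar := tvDist_nonneg (μ j) μbar
  have h1α : (0 : ℝ) ≤ 1 - α := by linarith
  have := ENNReal.toReal_mono (a := ENNReal.ofReal (1 - α))
    (by simp [ENNReal.add_eq_top, hfin]) hcomb
  rw [ENNReal.toReal_ofReal h1α, ENNReal.toReal_add hfin ENNReal.ofReal_ne_top,
    ENNReal.toReal_ofReal htv] at this
  linarith
end
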